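/- Let r ≥ 2 be a fixed integer. Let (G_n) be a sequence of graphs where G_n has n vertices and every vertex of G_n has degree (1 + o(1))·d_n. Then for every ε > 0 and all sufficiently large n, κ_{r,2}(G_n) ≤ (1 − 1/r + ε)·d_n²/n. -/

import Mathlib

open Filter

noncomputable section
open scoped Classical

/-- `HasAltConn G r ℓ t`: there is an `r`-edge-coloring of `G` (a color in `Fin r` for every
potential edge; only values on actual edges matter) such that every pair of distinct vertices
is joined by `t` pairwise internally disjoint alternating paths of length `ℓ`. -/
def HasAltConn {V : Type*} (G : SimpleGraph V) (r ℓ t : ℕ) : Prop :=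
  ∃ c : Sym2 V → Fin r, ∀ u v : V, u ≠ v →
    ∃ f : Fin t → G.Walk u v,
      Function.Injective f ∧
      (∀ i, (f i).IsPath ∧ (f i).length = ℓ ∧
        List.Chain' (fun e e' => c e ≠ c e') (f i).edges) ∧
      (∀ i j, i ≠ j → ∀ x, x ∈ (f i).support.tail.dropLast → x ∉ (f j).support.tail.dropLast)

/-- The alternating connectivity `κ_{r,ℓ}(G)`. -/
def altConn {V : Type*} (G : SimpleGraph V) (r ℓ : ℕ) : ℕ :=
  sSup {t | HasAltConn G r ℓ t}

/-- A walk of length 2 is determined by its midpoint. -/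
lemma AltAux.walk_len2 {V : Type*} {G : SimpleGraph V} {u v : V} (p : G.Walk u v)
    (hl : p.length = 2) :
    ∃ w, G.Adj u w ∧ G.Adj w v ∧ p.edges = [s(u,w), s(w,v)] ∧
      p.support.tail.dropLast = [w] := by
  cases p with
  | nil => simp at hl
  | cons h q =>
    cases q with
    | nil => simp at hl
    | @cons w x _ h' q' =>
      cases q' with
      | nil => exact ⟨_, h, h', by simp, by simp⟩
      | cons h'' q'' => simp [SimpleGraph.Walk.length_cons] at hl

/-- Extracting the midpoints of a family of internally disjoint alternating length-2 paths. -/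
lemma AltAux.midpoints {V : Type*} {G : SimpleGraph V} {r t : ℕ} {c : Sym2 V → Fin r} {u v : V}
    (f : Fin t → G.Walk u v)
    (hprop : ∀ i, (f i).IsPath ∧ (f i).length = 2 ∧
      List.Chain' (fun e e' => c e ≠ c e') (f i).edges)
    (hdisj : ∀ i j, i ≠ j → ∀ x, x ∈ (f i).support.tail.dropLast →
      x ∉ (f j).support.tail.dropLast) :
    ∃ S : Finset V, S.card = t ∧
      ∀ w ∈ S, G.Adj u w ∧ G.Adj w v ∧ c s(u,w) ≠ c s(w,v) := by
  have spec := fun i => (AltAux.walk_len2 (f i) (hprop i).2.1).choose_spec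
  set m : Fin t → V := fun i => (AltAux.walk_len2 (f i) (hprop i).2.1).choose with hm
  have hminj : Function.Injective m := by
    intro i j hij
    by_contra hne
    have h1 : m i ∈ (f i).support.tail.dropLast := by rw [(spec i).2.2.2]; simp; rfl
    have h2 : m i ∈ (f j).support.tail.dropLast := by
      rw [(spec j).2.2.2, hij]; simp; rfl
    exact hdisj i j hne (m i) h1 h2
  refine ⟨Finset.univ.image m, ?_, ?_⟩
  · rw [Finset.card_image_of_injective _ hminj, Finset.card_univ, Fintype.card_fin]
  · intro w hw
    obtain ⟨i, _, hi⟩ := Finset.mem_image.1 hw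
    obtain ⟨ha, hb, hedges, _⟩ := spec i
    have halt := (hprop i).2.2
    rw [hedges] at halt
    have : c s(u, m i) ≠ c s(m i, v) := by exact (List.isChain_pair (R := fun e e' => c e ≠ c e')).1 halt
    subst hi
    exact ⟨ha, hb, this⟩

/-- Convexity: pairs of differently `g`-colored elements of `N × N` number at most
`(1 - 1/r) |N|²`. -/
lemma AltAux.per_vertex {V : Type*} (r : ℕ) (N : Finset V) (g : V → Fin r) :
    r * ((N ×ˢ N).filter fun p => g p.1 ≠ g p.2).card ≤ (r-1) * N.card ^ 2 := by
  set b : Fin r → ℕ := fun i => (N.filter fun u => g u = i).card with hb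
  have hsum : ∑ i, b i = N.card :=
    (Finset.card_eq_sum_card_fiberwise (f := g) (fun x _ => Finset.mem_univ _)).symm
  have heq : ((N ×ˢ N).filter fun p => g p.1 = g p.2).card = ∑ i, b i ^ 2 := by
    rw [Finset.card_eq_sum_card_fiberwise (f := fun p : V × V => g p.1)
      (t := Finset.univ) (fun x _ => Finset.mem_univ _)]
    refine Finset.sum_congr rfl fun i _ => ?_
    have : ((N ×ˢ N).filter fun p => g p.1 = g p.2).filter (fun p => g p.1 = i)
        = (N.filter fun u => g u = i) ×ˢ (N.filter fun u => g u = i) := by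
      ext ⟨a, c⟩
      simp only [Finset.mem_filter, Finset.mem_product]
      constructor
      · rintro ⟨⟨⟨ha, hc⟩, he⟩, hi⟩
        exact ⟨⟨ha, hi⟩, hc, he ▸ hi⟩
      · rintro ⟨⟨ha, hi⟩, hc, hi'⟩
        exact ⟨⟨⟨ha, hc⟩, hi.trans hi'.symm⟩, hi⟩
    rw [this, Finset.card_product, sq]
  have hpart : ((N ×ˢ N).filter fun p => g p.1 = g p.2).card
      + ((N ×ˢ N).filter fun p => ¬ g p.1 = g p.2).card = N.card ^ 2 := by
    rw [Finset.card_filter_add_card_filter_not, Finset.card_product, sq]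
  have hCS : N.card ^ 2 ≤ r * ∑ i, b i ^ 2 := by
    have := sq_sum_le_card_mul_sum_sq (s := (Finset.univ : Finset (Fin r))) (f := b)
    simpa [hsum] using this
  have key : r * ((N ×ˢ N).filter fun p => ¬ g p.1 = g p.2).card + N.card ^ 2
      ≤ r * N.card ^ 2 := by
    calc r * ((N ×ˢ N).filter fun p => ¬ g p.1 = g p.2).card + N.card ^ 2
        ≤ r * ((N ×ˢ N).filter fun p => ¬ g p.1 = g p.2).card + r * ∑ i, b i ^ 2 :=
          Nat.add_le_add_left hCS _
      _ = r * (((N ×ˢ N).filter fun p => ¬ g p.1 = g p.2).card + ∑ i, b i ^ 2) := by ring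
      _ = r * N.card ^ 2 := by rw [← heq, Nat.add_comm, hpart]
  rw [Nat.sub_one_mul]
  exact Nat.le_sub_of_add_le key

/-- The counting inequality: `r · t · n(n-1) ≤ (r-1) Σ deg²`. -/
lemma AltAux.count_lemma {V : Type*} [Fintype V] (G : SimpleGraph V) (r t : ℕ)
    (c : Sym2 V → Fin r)
    (hS : ∀ u v : V, u ≠ v → ∃ S : Finset V, S.card = t ∧
      ∀ w ∈ S, G.Adj u w ∧ G.Adj w v ∧ c s(u,w) ≠ c s(w,v)) :
    r * (t * (Fintype.card V * Fintype.card V - Fintype.card V)) ≤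
      (r-1) * ∑ w, G.degree w ^ 2 := by
  set P : Finset (V × V × V) := Finset.univ.filter
    (fun x : V × V × V => x.2.1 ≠ x.2.2 ∧ G.Adj x.2.1 x.1 ∧ G.Adj x.1 x.2.2 ∧
      c s(x.2.1, x.1) ≠ c s(x.1, x.2.2)) with hP
  have hmemP : ∀ x : V × V × V, x ∈ P ↔ x.2.1 ≠ x.2.2 ∧ G.Adj x.2.1 x.1 ∧ G.Adj x.1 x.2.2 ∧
      c s(x.2.1, x.1) ≠ c s(x.1, x.2.2) := by
    intro x; simp [hP]
  have h1 : t * (Fintype.card V * Fintype.card V - Fintype.card V) ≤ P.card := by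
    have hfib := Finset.card_eq_sum_card_fiberwise
      (f := fun x : V × V × V => (x.2.1, x.2.2)) (s := P)
      (t := (Finset.univ : Finset V).offDiag)
      (fun x hx => by
        rw [Finset.mem_coe, hmemP] at hx
        exact Finset.mem_offDiag.2 ⟨Finset.mem_univ _, Finset.mem_univ _, hx.1⟩)
    have hcard : (Finset.univ : Finset V).offDiag.card
        = Fintype.card V * Fintype.card V - Fintype.card V := by
      rw [Finset.offDiag_card]; simp [Finset.card_univ]
    rw [← hcard, hfib, mul_comm, ← smul_eq_mul]
    refine Finset.card_nsmul_le_sum _ _ _ ?_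
    rintro ⟨u, v⟩ hp
    have huv : u ≠ v := (Finset.mem_offDiag.1 hp).2.2
    obtain ⟨S, hScard, hSmem⟩ := hS u v huv
    rw [← hScard]
    refine Finset.card_le_card_of_injOn (fun w => (w, u, v)) ?_ ?_
    · intro w hw
      obtain ⟨ha, hb, hc⟩ := hSmem w hw
      refine Finset.mem_filter.2 ⟨(hmemP _).2 ⟨huv, ha, hb, hc⟩, rfl⟩
    · intro a _ b _ hab
      exact congrArg (fun x : V × V × V => x.1) hab
  have h2 : r * P.card ≤ (r-1) * ∑ w, G.degree w ^ 2 := by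
    have hfib := Finset.card_eq_sum_card_fiberwise
      (f := fun x : V × V × V => x.1) (s := P) (t := (Finset.univ : Finset V))
      (fun x _ => Finset.mem_univ _)
    rw [hfib, Finset.mul_sum, Finset.mul_sum]
    refine Finset.sum_le_sum fun w _ => ?_
    have hmap : (P.filter fun x => x.1 = w).card ≤
        ((G.neighborFinset w ×ˢ G.neighborFinset w).filter
          fun p => c s(p.1, w) ≠ c s(p.2, w)).card := by
      refine Finset.card_le_card_of_injOn (fun x => (x.2.1, x.2.2)) ?_ ?_
      · intro x hx
        obtain ⟨hxP, hx1⟩ := Finset.mem_filter.1 hx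
        obtain ⟨_, ha, hb, hc⟩ := (hmemP _).1 hxP
        subst hx1
        refine Finset.mem_filter.2 ⟨Finset.mem_product.2
          ⟨G.mem_neighborFinset _ _ |>.2 ha.symm, G.mem_neighborFinset _ _ |>.2 hb⟩, ?_⟩
        simpa [Sym2.eq_swap] using hc
      · intro a ha b hb hab
        obtain ⟨_, ha1⟩ := Finset.mem_filter.1 ha
        obtain ⟨_, hb1⟩ := Finset.mem_filter.1 hb
        have h1 : a.2.1 = b.2.1 := congrArg Prod.fst hab
        have h2 : a.2.2 = b.2.2 := congrArg Prod.snd hab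
        exact Prod.ext (ha1.trans hb1.symm) (Prod.ext h1 h2)
    calc r * (P.filter fun x => x.1 = w).card
        ≤ r * ((G.neighborFinset w ×ˢ G.neighborFinset w).filter
            fun p => c s(p.1, w) ≠ c s(p.2, w)).card := Nat.mul_le_mul_left _ hmap
      _ ≤ (r-1) * (G.neighborFinset w).card ^ 2 :=
          AltAux.per_vertex r (G.neighborFinset w) (fun u => c s(u, w))
      _ = (r-1) * G.degree w ^ 2 := by rw [G.card_neighborFinset_eq_degree]
  calc r * (t * (Fintype.card V * Fintype.card V - Fintype.card V))
      ≤ r * P.card := Nat.mul_le_mul_left _ h1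
    _ ≤ (r-1) * ∑ w, G.degree w ^ 2 := h2

set_option maxHeartbeats 1000000 in
/-- if every vertex of `G_n` has degree `(1+o(1))d_n`, then for fixed `r ≥ 2`,
for every `ε > 0` and all large `n`, `κ_{r,2}(G_n) ≤ (1 - 1/r + ε)d_n²/n`. -/
theorem altConn_length_two_upper (r : ℕ) (hr : 2 ≤ r)
    (G : ∀ n : ℕ, SimpleGraph (Fin n)) (d : ℕ → ℝ)
    (hdeg : ∀ ε > (0 : ℝ), ∀ᶠ n : ℕ in atTop, ∀ v : Fin n,
      |((G n).degree v : ℝ) - d n| ≤ ε * d n) :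
    ∀ ε > (0 : ℝ), ∀ᶠ n : ℕ in atTop,
      (altConn (G n) r 2 : ℝ) ≤ (1 - 1 / (r : ℝ) + ε) * (d n ^ 2 / n) := by
  intro ε hε
  set δ : ℝ := min (ε/7) 1 with hδdef
  have hδ0 : 0 < δ := lt_min (by linarith) one_pos
  have hδε : δ ≤ ε/7 := min_le_left _ _
  have hδ1 : δ ≤ 1 := min_le_right _ _
  filter_upwards [hdeg δ hδ0, eventually_ge_atTop (⌈1/δ⌉₊ + 2)] with n hdn hn
  have hn2 : 2 ≤ n := le_trans (by omega) hn
  have hNr : (1:ℝ) ≤ δ * ((n:ℝ) - 1) := by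
    have h1 : 1/δ ≤ (n:ℝ) - 1 := by
      have h2 : (⌈1/δ⌉₊ : ℝ) + 1 ≤ (n:ℝ) - 1 := by
        have : ((⌈1/δ⌉₊ + 2 : ℕ) : ℝ) ≤ (n:ℝ) := by exact_mod_cast hn
        push_cast at this; linarith
      exact le_trans (Nat.le_ceil _) (by linarith)
    have := mul_le_mul_of_nonneg_left h1 hδ0.le
    rwa [mul_one_div, div_self (ne_of_gt hδ0)] at this
  have hd0 : 0 ≤ d n := by
    have habs := hdn ⟨0, by omega⟩
    have h0 : (0:ℝ) ≤ δ * d n := le_trans (abs_nonneg _) habs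
    nlinarith
  have hdegle : ∀ v : Fin n, ((G n).degree v : ℝ) ≤ (1+δ) * d n := by
    intro v
    have := (abs_le.1 (hdn v)).2
    linarith
  -- the set of achievable `t`
  have hbound : ∀ t, HasAltConn (G n) r 2 t →
      r * (t * (n*n - n)) ≤ (r-1) * ∑ w, (G n).degree w ^ 2 := by
    rintro t ⟨c, hc⟩
    have hS' : ∀ u v : Fin n, u ≠ v → ∃ S' : Finset (Fin n), S'.card = t ∧
        ∀ w ∈ S', (G n).Adj u w ∧ (G n).Adj w v ∧ c s(u,w) ≠ c s(w,v) := by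
      intro u v huv
      obtain ⟨f, hfinj, hprop, hdisj⟩ := hc u v huv
      exact AltAux.midpoints f hprop hdisj
    have := AltAux.count_lemma (G n) r t c hS'
    simpa [Fintype.card_fin] using this
  have hne : {t | HasAltConn (G n) r 2 t}.Nonempty := by
    refine ⟨0, ⟨fun _ => ⟨0, by omega⟩, fun u v huv => ⟨Fin.elim0, ?_, ?_, ?_⟩⟩⟩
    · intro i; exact i.elim0
    · intro i; exact i.elim0
    · intro i; exact i.elim0
  have hnn1 : 1 ≤ n * n - n := by
    have h2 : 2 * n ≤ n * n := Nat.mul_le_mul_right n hn2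
    omega
  have hbdd : BddAbove {t | HasAltConn (G n) r 2 t} := by
    refine ⟨(r-1) * ∑ w, (G n).degree w ^ 2, fun t ht => ?_⟩
    have := hbound t ht
    calc t = 1 * (t * 1) := by ring
      _ ≤ r * (t * (n*n - n)) :=
        Nat.mul_le_mul (by omega) (Nat.mul_le_mul_left _ hnn1)
      _ ≤ (r-1) * ∑ w, (G n).degree w ^ 2 := this
  have htS : altConn (G n) r 2 ∈ {t | HasAltConn (G n) r 2 t} := Nat.sSup_mem hne hbdd
  set t := altConn (G n) r 2 with ht
  have hmain := hbound t htS
  -- cast to the reals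
  have hcast : (r:ℝ) * ((t:ℝ) * ((n:ℝ)*(n:ℝ) - (n:ℝ))) ≤
      ((r:ℝ)-1) * ∑ w, ((G n).degree w : ℝ)^2 := by
    have h' : ((r * (t*(n*n-n)) : ℕ) : ℝ) ≤ (((r-1) * ∑ w, (G n).degree w ^ 2 : ℕ) : ℝ) :=
      Nat.cast_le.2 hmain
    have hle : n ≤ n*n := Nat.le_mul_of_pos_left n (by omega)
    have hr1 : 1 ≤ r := by omega
    push_cast [Nat.cast_sub hle, Nat.cast_sub hr1] at h'
    convert h' using 2 <;> push_cast <;> ring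
  have hsum : ∑ w, ((G n).degree w : ℝ)^2 ≤ (n:ℝ) * ((1+δ)*d n)^2 := by
    calc ∑ w, ((G n).degree w:ℝ)^2 ≤ ∑ _w : Fin n, ((1+δ)*d n)^2 :=
        Finset.sum_le_sum fun w _ =>
          pow_le_pow_left₀ (by positivity) (hdegle w) 2
      _ = (n:ℝ) * ((1+δ)*d n)^2 := by
          rw [Finset.sum_const, Finset.card_univ, Fintype.card_fin, nsmul_eq_mul]
  -- real arithmetic
  set R : ℝ := (r:ℝ) with hRdef
  set N : ℝ := (n:ℝ) with hNdef
  set D : ℝ := d n with hDdef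
  have hR2 : (2:ℝ) ≤ R := by rw [hRdef]; exact_mod_cast hr
  have hN2 : (2:ℝ) ≤ N := by rw [hNdef]; exact_mod_cast hn2
  have hδ2 : δ*δ ≤ δ := by nlinarith
  have hδ3 : δ*δ*δ ≤ δ := by nlinarith
  have hstep1 : (1+δ)^3 ≤ 1 + ε := by
    have hexp : (1+δ)^3 = 1 + 3*δ + 3*(δ*δ) + δ*δ*δ := by ring
    rw [hexp]; linarith
  have hstep2 : (R-1)*(1+δ)^2*N ≤ (R-1+ε*R)*(N-1) := by
    have hNle : N ≤ (1+δ)*(N-1) := by nlinarith [hNr]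
    calc (R-1)*(1+δ)^2*N ≤ (R-1)*(1+δ)^2*((1+δ)*(N-1)) := by
          refine mul_le_mul_of_nonneg_left hNle ?_
          have : (0:ℝ) ≤ (1+δ)^2 := by positivity
          nlinarith
      _ = (R-1)*(1+δ)^3*(N-1) := by ring
      _ ≤ (R-1)*(1+ε)*(N-1) := by
          refine mul_le_mul_of_nonneg_right ?_ (by linarith)
          exact mul_le_mul_of_nonneg_left hstep1 (by linarith)
      _ ≤ (R-1+ε*R)*(N-1) := by
          refine mul_le_mul_of_nonneg_right ?_ (by linarith)
          nlinarith
  have hmain2 : (t:ℝ) * (R*N*(N-1)) ≤ ((R-1+ε*R)*(N-1))*D^2 := by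
    calc (t:ℝ) * (R*N*(N-1)) = R * ((t:ℝ) * (N*N - N)) := by ring
      _ ≤ (R-1) * ∑ w, ((G n).degree w : ℝ)^2 := hcast
      _ ≤ (R-1) * (N * ((1+δ)*D)^2) :=
          mul_le_mul_of_nonneg_left hsum (by linarith)
      _ = ((R-1)*(1+δ)^2*N)*D^2 := by ring
      _ ≤ ((R-1+ε*R)*(N-1))*D^2 :=
          mul_le_mul_of_nonneg_right hstep2 (by positivity)
  have hpos : 0 < R*N*(N-1) :=
    mul_pos (mul_pos (by linarith) (by linarith)) (by linarith)
  have hfinal : (t:ℝ) ≤ (((R-1+ε*R)*(N-1))*D^2)/(R*N*(N-1)) :=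
    (le_div_iff₀ hpos).2 hmain2
  have heqv : (((R-1+ε*R)*(N-1))*D^2)/(R*N*(N-1)) = (1-1/R+ε)*(D^2/N) := by
    have hR0 : R ≠ 0 := by linarith
    have hN0 : N ≠ 0 := by linarith
    have hN1 : N - 1 ≠ 0 := by linarith
    field_simp
  rw [heqv] at hfinal
  exact hfinal
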